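/- For |I| = 4, every automorphism of the Johnson graph J(I,2) is either induced by a permutation of I, or is the composition of a permutation-induced automorphism with the complementation map sending each 2-element subset J to I ∖ J. -/

import Mathlib

/-- The Johnson graph `J(I,2)`: vertices are the `2`-element subsets of `I`, two
distinct subsets being adjacent iff they intersect. -/
def johnsonGraph (ι : Type*) [DecidableEq ι] :
    SimpleGraph {s : Finset ι // s.card = 2} where
  Adj s t := s ≠ t ∧ (s.val ∩ t.val).Nonempty
  symm := by
    constructor
    rintro s t ⟨h1, h2⟩
    exact ⟨h1.symm, by rwa [Finset.inter_comm]⟩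
  loopless := by
    constructor
    rintro s ⟨h, -⟩
    exact h rfl

instance johnsonAdjDec (ι : Type*) [DecidableEq ι] : DecidableRel (johnsonGraph ι).Adj :=
  fun s t => inferInstanceAs (Decidable (s ≠ t ∧ (s.val ∩ t.val).Nonempty))

lemma key : ∀ f : Equiv.Perm {s : Finset (Fin 4) // s.card = 2},
    (∀ a b, (johnsonGraph (Fin 4)).Adj (f a) (f b) ↔ (johnsonGraph (Fin 4)).Adj a b) →
    ∃ π : Equiv.Perm (Fin 4),
      (∀ s, (f s).val = s.val.image π) ∨
      (∀ s, (f s).val = (s.val.image π)ᶜ) := by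
  set_option maxRecDepth 10000 in decide

theorem stmt_11 {ι : Type*} [DecidableEq ι] [Fintype ι]
    (h4 : Fintype.card ι = 4)
    (τ : johnsonGraph ι ≃g johnsonGraph ι) :
    ∃ π : Equiv.Perm ι,
      (∀ s : {s : Finset ι // s.card = 2}, (τ s).val = s.val.image π) ∨
      (∀ s : {s : Finset ι // s.card = 2}, (τ s).val = (s.val.image π)ᶜ) := by
  classical
  obtain ⟨e⟩ : Nonempty (ι ≃ Fin 4) := by
    rw [← Fintype.card_eq, h4, Fintype.card_fin]
  -- vertex equivalence
  have cardim : ∀ s : Finset ι, s.card = 2 → (s.image e).card = 2 := fun s hs => by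
    rw [Finset.card_image_of_injective _ e.injective, hs]
  have cardim' : ∀ s : Finset (Fin 4), s.card = 2 → (s.image e.symm).card = 2 := fun s hs => by
    rw [Finset.card_image_of_injective _ e.symm.injective, hs]
  let ve : {s : Finset ι // s.card = 2} ≃ {s : Finset (Fin 4) // s.card = 2} :=
    { toFun := fun s => ⟨s.val.image e, cardim _ s.2⟩
      invFun := fun s => ⟨s.val.image e.symm, cardim' _ s.2⟩
      left_inv := fun s => by
        ext : 1
        simp [Finset.image_image, Function.comp_def]
      right_inv := fun s => by
        ext : 1
        simp [Finset.image_image, Function.comp_def] }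
  have ve_adj : ∀ a b, (johnsonGraph (Fin 4)).Adj (ve a) (ve b) ↔ (johnsonGraph ι).Adj a b := by
    intro a b
    constructor
    · rintro ⟨h1, h2⟩
      refine ⟨fun h => h1 (by rw [h]), ?_⟩
      have h2' : ((a.val.image e) ∩ (b.val.image e)).Nonempty := h2
      rwa [← Finset.image_inter _ _ e.injective, Finset.image_nonempty] at h2'
    · rintro ⟨h1, h2⟩
      refine ⟨fun h => h1 (ve.injective h), ?_⟩
      show ((a.val.image e) ∩ (b.val.image e)).Nonempty
      rwa [← Finset.image_inter _ _ e.injective, Finset.image_nonempty]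
  let f : Equiv.Perm {s : Finset (Fin 4) // s.card = 2} :=
    ve.symm.trans ((τ.toEquiv).trans ve)
  have hf : ∀ a b, (johnsonGraph (Fin 4)).Adj (f a) (f b) ↔ (johnsonGraph (Fin 4)).Adj a b := by
    intro a b
    show (johnsonGraph (Fin 4)).Adj (ve (τ (ve.symm a))) (ve (τ (ve.symm b))) ↔ _
    rw [ve_adj, τ.map_adj_iff, ← ve_adj, ve.apply_symm_apply, ve.apply_symm_apply]
  obtain ⟨π', hπ'⟩ := key f hf
  refine ⟨(e.trans π').trans e.symm, ?_⟩
  have himg : ∀ s : Finset ι, s.image (⇑((e.trans π').trans e.symm)) = ((s.image e).image π').image e.symm := by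
    intro s
    simp [Finset.image_image, Function.comp_def]
  rcases hπ' with hπ' | hπ'
  · left
    intro s
    have := hπ' (ve s)
    -- this : (f (ve s)).val = (ve s).val.image π'
    have h2 : (ve (τ s)).val = (ve s).val.image π' := by
      simpa [f, ve.symm_apply_apply] using this
    have h3 : (τ s).val.image e = (s.val.image e).image π' := h2
    rw [himg, ← h3, Finset.image_image]
    simp [Function.comp_def]
  · right
    intro s
    have := hπ' (ve s)
    have h2 : (ve (τ s)).val = ((ve s).val.image π')ᶜ := by
      simpa [f, ve.symm_apply_apply] using this
    have h3 : (τ s).val.image e = ((s.val.image e).image π')ᶜ := h2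
    have h4' : (τ s).val = (((s.val.image e).image π')ᶜ).image e.symm := by
      rw [← h3, Finset.image_image]; simp [Function.comp_def]
    rw [h4']
    -- image of complement under a bijection
    have hc : ∀ A : Finset (Fin 4), (Aᶜ).image e.symm = (A.image e.symm)ᶜ := by
      intro A
      ext x
      simp [Finset.mem_image, e.symm_apply_eq, eq_comm]
    rw [hc, himg]
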